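/- Every morphism in the cyclic category from [k] to [m] admits a unique factorization as a cyclic permutation of [k] followed by a monotone (order-preserving) map [k] → [m] (Connes' factorization theorem). -/

import Mathlib

/-- The standard model of a morphism `[k] → [m]` in the cyclic category `ΛC`:
a monotone map `f : ℤ → ℤ` with `f (i + (k+1)) = f i + (m+1)`, considered up to
adding an integer multiple of `m+1`.  `interpZ k m μ j` is the morphism `μ ∘ τₖʲ`
determined by a monotone map `μ : [k] → [m]` and a cyclic shift `τₖʲ` (where
`τₖ (i) = (i-1) mod (k+1)`). -/
def interpZ (k m : ℕ) (μ : Fin (k + 1) →o Fin (m + 1)) (j : Fin (k + 1)) : ℤ → ℤ :=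
  fun i =>
    ((i - ((j : ℕ) : ℤ)) / (k + 1)) * (m + 1) +
      ((μ ⟨((i - ((j : ℕ) : ℤ)) % (k + 1)).toNat, by
        have h1 : (0 : ℤ) ≤ (i - ((j : ℕ) : ℤ)) % (k + 1) :=
          Int.emod_nonneg _ (by positivity)
        have h2 : (i - ((j : ℕ) : ℤ)) % (k + 1) < (k + 1) :=
          Int.emod_lt_of_pos _ (by positivity)
        omega⟩ : Fin (m + 1)) : ℕ)

private lemma ediv_eq_neg_one' {b : ℤ} (hb : 0 < b) {a : ℤ} (h1 : -b ≤ a) (h2 : a < 0) :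
    a / b = -1 := by
  have h : a = (a + b) + (-1) * b := by ring
  rw [h, Int.add_mul_ediv_right _ _ (ne_of_gt hb),
    Int.ediv_eq_zero_of_lt (by omega) (by omega)]
  omega

private lemma interpZ_eq (k m : ℕ) (μ : Fin (k + 1) →o Fin (m + 1)) (j : Fin (k + 1)) (i : ℤ)
    (t : Fin (k + 1)) (ht : (i - ((j : ℕ) : ℤ)) % ((k : ℤ) + 1) = ((t : ℕ) : ℤ)) :
    interpZ k m μ j i =
      ((i - ((j : ℕ) : ℤ)) / ((k : ℤ) + 1)) * ((m : ℤ) + 1) + ((μ t : Fin (m + 1)) : ℕ) := by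
  unfold interpZ
  have : (⟨((i - ((j : ℕ) : ℤ)) % ((k : ℤ) + 1)).toNat, by omega⟩ : Fin (k + 1)) = t := by
    apply Fin.ext
    simp only []
    omega
  rw [this]

/-- periodicity iterated -/
private lemma fper_all (k m : ℕ) (f : ℤ → ℤ)
    (hper : ∀ i, f (i + ((k : ℤ) + 1)) = f i + ((m : ℤ) + 1)) :
    ∀ (n : ℤ) (i : ℤ), f (i + n * ((k : ℤ) + 1)) = f i + n * ((m : ℤ) + 1) := by
  intro n
  induction n using Int.induction_on with
  | zero => simp
  | succ n ih =>
    intro i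
    have h1 : i + ((n : ℤ) + 1) * ((k : ℤ) + 1) = (i + n * ((k : ℤ) + 1)) + ((k : ℤ) + 1) := by
      ring
    rw [h1, hper, ih]; ring
  | pred n ih =>
    intro i
    have h2 := hper (i + (-(n : ℤ) - 1) * ((k : ℤ) + 1))
    have h3 : i + (-(n : ℤ) - 1) * ((k : ℤ) + 1) + ((k : ℤ) + 1) = i + (-(n : ℤ)) * ((k : ℤ) + 1) := by
      ring
    rw [h3, ih] at h2
    linarith [h2]

set_option maxHeartbeats 1000000 in
/-- Connes' factorization theorem: every morphism `[k] → [m]` of the cyclic category,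
presented as a monotone `ℤ → ℤ` map `f` with `f (i + (k+1)) = f i + (m+1)` modulo
translation by `m+1`, factors uniquely as a cyclic permutation `τₖʲ` (with `0 ≤ j ≤ k`)
followed by a monotone map `μ : [k] → [m]`. -/
theorem connes_factorization (k m : ℕ) (f : ℤ → ℤ) (hmono : Monotone f)
    (hper : ∀ i, f (i + (k + 1)) = f i + (m + 1)) :
    ∃! p : (Fin (k + 1) →o Fin (m + 1)) × Fin (k + 1),
      ∃ c : ℤ, ∀ i, f i = interpZ k m p.1 p.2 i + c * (m + 1) := by
  have hk1 : (0 : ℤ) < (k : ℤ) + 1 := by positivity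
  have hm1 : (0 : ℤ) < (m : ℤ) + 1 := by positivity
  have fper := fper_all k m f hper
  -- the "floor" function q
  set q : ℤ → ℤ := fun i => f i / ((m : ℤ) + 1) with hq_def
  have hqmono : Monotone q := fun a b hab => Int.ediv_le_ediv hm1 (hmono hab)
  have hqbound : ∀ x, q x * ((m : ℤ) + 1) ≤ f x ∧ f x < q x * ((m : ℤ) + 1) + ((m : ℤ) + 1) := by
    intro x
    have h1 := Int.mul_ediv_add_emod (f x) ((m : ℤ) + 1)
    have h2 := Int.emod_nonneg (f x) (ne_of_gt hm1)
    have h3 := Int.emod_lt_of_pos (f x) hm1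
    constructor <;> [nlinarith [h1, h2]; nlinarith [h1, h3]]
  have hqper : ∀ i, q (i + ((k : ℤ) + 1)) = q i + 1 := by
    intro i
    have := hqbound i
    have := hqbound (i + ((k : ℤ) + 1))
    have hfp := hper i
    -- f (i+(k+1)) = f i + (m+1); its floor is q i + 1
    nlinarith [this.1, this.2]
  -- find the jump point s
  have hPex : ∃ n : ℕ, q 0 + 1 ≤ q (n : ℤ) := by
    refine ⟨k + 1, ?_⟩
    have h := hqper 0
    rw [zero_add] at h
    push_cast
    omega
  set s := Nat.find hPex with hs_def
  have hs : q 0 + 1 ≤ q (s : ℤ) := Nat.find_spec hPex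
  have hs' : ∀ t : ℕ, t < s → ¬ (q 0 + 1 ≤ q (t : ℤ)) := fun t ht => Nat.find_min hPex ht
  have hs1 : 1 ≤ s := by
    by_contra h
    have h0 : s = 0 := by omega
    rw [h0] at hs
    norm_num at hs
  have hsk : s ≤ k + 1 := Nat.find_le (by
    have h := hqper 0
    rw [zero_add] at h
    push_cast
    omega)
  -- q (k+1) = q 0 + 1, and q s = q 0 + 1, q (s-1) = q 0
  have hqk1 : q ((k : ℤ) + 1) = q 0 + 1 := by
    have h := hqper 0; rw [zero_add] at h; omega
  have hqs : q (s : ℤ) = q 0 + 1 := by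
    have h1 : q (s : ℤ) ≤ q ((k : ℤ) + 1) := hqmono (by push_cast; omega)
    omega
  have hqs' : ∀ t : ℕ, t < s → q (t : ℤ) = q 0 := by
    intro t ht
    have h1 := hs' t ht
    have h2 : q 0 ≤ q (t : ℤ) := hqmono (by positivity)
    omega
  -- the shift
  set jn : ℕ := if s = k + 1 then 0 else s with hjn_def
  have hjnk : jn ≤ k := by rw [hjn_def]; split <;> omega
  have hjlt : jn < k + 1 := Nat.lt_succ_of_le hjnk
  set jz : ℤ := (jn : ℤ) with hjz_def
  have hjz0 : 0 ≤ jz := by positivity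
  -- q is constant on the window [jz, jz + k]
  have hwin : ∀ i : ℤ, jz ≤ i → i ≤ jz + k → q i = q jz := by
    intro i hi1 hi2
    rw [hjz_def, hjn_def] at *
    by_cases hcase : s = k + 1
    · simp only [hcase, if_pos rfl] at *
      push_cast at *
      -- window [0, k], q constant = q 0
      have h1 : q i ≤ q (k : ℤ) := hqmono (by omega)
      have h2 : q 0 ≤ q i := hqmono (by omega)
      have h3 : q ((k : ℕ) : ℤ) = q 0 := by
        have := hqs' k (by omega); push_cast at this; omega
      have h4 : q ((0:ℕ) : ℤ) = q 0 := by norm_num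
      push_cast at h3
      omega
    · simp only [if_neg hcase] at *
      have hsk' : s ≤ k := by omega
      -- value on window is q 0 + 1
      have hval : q i = q 0 + 1 := by
        by_cases hc2 : i ≤ (k : ℤ) + 1
        · have h1 : q (s : ℤ) ≤ q i := hqmono (by omega)
          have h2 : q i ≤ q ((k : ℤ) + 1) := hqmono (by omega)
          omega
        · -- i ≥ k + 2 : use periodicity
          have h5 := hqper (i - ((k : ℤ) + 1))
          rw [sub_add_cancel] at h5
          have h6 : q (i - ((k : ℤ) + 1)) = q 0 := by
            have h7 : q 0 ≤ q (i - ((k : ℤ) + 1)) := hqmono (by omega)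
            have h8 : q (i - ((k : ℤ) + 1)) ≤ q ((s : ℤ) - 1) := hqmono (by omega)
            have h9 : q ((s : ℤ) - 1) = q 0 := by
              have := hqs' (s - 1) (by omega)
              push_cast [Nat.cast_sub (by omega : 1 ≤ s)] at this ⊢
              omega
            omega
          omega
      have hval0 : q (s : ℤ) = q 0 + 1 := hqs
      omega
  set c : ℤ := q jz with hc_def
  -- the monotone map μ
  have hμbound : ∀ t : Fin (k + 1), 0 ≤ f (jz + (t : ℕ)) - c * ((m : ℤ) + 1) ∧
      f (jz + (t : ℕ)) - c * ((m : ℤ) + 1) < (m : ℤ) + 1 := by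
    intro t
    have ht : q (jz + (t : ℕ)) = c := by
      apply hwin <;> [omega; (have := t.isLt; push_cast; omega)]
    have hb := hqbound (jz + (t : ℕ))
    rw [ht] at hb
    omega
  set μ : Fin (k + 1) →o Fin (m + 1) :=
    ⟨fun t => ⟨(f (jz + (t : ℕ)) - c * ((m : ℤ) + 1)).toNat, by
        have := hμbound t; omega⟩,
     by
        intro a b hab
        simp only [Fin.mk_le_mk]
        have h1 : f (jz + (a : ℕ)) ≤ f (jz + (b : ℕ)) := by
          apply hmono
          have : (a : ℕ) ≤ (b : ℕ) := hab
          omega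
        omega⟩ with hμ_def
  have hμval : ∀ t : Fin (k + 1), ((μ t : Fin (m + 1)) : ℕ) = (f (jz + (t : ℕ)) - c * ((m : ℤ) + 1)).toNat := by
    intro t; rfl
  -- the main identity
  have hmain : ∀ i : ℤ, f i = interpZ k m μ ⟨jn, hjlt⟩ i + c * ((m : ℤ) + 1) := by
    intro i
    set n : ℤ := (i - jz) / ((k : ℤ) + 1) with hn_def
    set t : ℤ := (i - jz) % ((k : ℤ) + 1) with ht_def
    have ht0 : 0 ≤ t := Int.emod_nonneg _ (ne_of_gt hk1)
    have htk : t < (k : ℤ) + 1 := Int.emod_lt_of_pos _ hk1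
    have hde : ((k : ℤ) + 1) * n + t = i - jz := Int.mul_ediv_add_emod _ _
    have hieq : i = (jz + t) + n * ((k : ℤ) + 1) := by linarith
    have hfi : f i = f (jz + t) + n * ((m : ℤ) + 1) := by rw [hieq, fper]
    have htfin : ((⟨t.toNat, by omega⟩ : Fin (k + 1)) : ℕ) = t.toNat := rfl
    rw [interpZ_eq k m μ ⟨jn, hjlt⟩ i ⟨t.toNat, by omega⟩ (by
      show (i - ((jn : ℕ) : ℤ)) % ((k : ℤ) + 1) = ((t.toNat : ℕ) : ℤ)
      rw [← hjz_def, ← ht_def]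
      omega)]
    have hcast : ((⟨jn, hjlt⟩ : Fin (k + 1)) : ℕ) = jn := rfl
    rw [hcast]
    have hμt := hμval ⟨t.toNat, by omega⟩
    rw [hμt]
    have htn : ((⟨t.toNat, by omega⟩ : Fin (k + 1)) : ℕ) = t.toNat := rfl
    rw [htn]
    have hb := hμbound ⟨t.toNat, by omega⟩
    rw [htn] at hb
    have htt : ((t.toNat : ℕ) : ℤ) = t := by omega
    rw [htt] at hb ⊢
    rw [hfi]
    have : (i - (jn : ℤ)) / ((k : ℤ) + 1) = n := by rw [hn_def, hjz_def]
    rw [this]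
    omega
  -- window evaluation of interpZ
  have hwev : ∀ (ν : Fin (k + 1) →o Fin (m + 1)) (l : Fin (k + 1)) (t : Fin (k + 1)),
      interpZ k m ν l (((l : ℕ) : ℤ) + ((t : ℕ) : ℤ)) = ((ν t : Fin (m + 1)) : ℕ) := by
    intro ν l t
    have htk : ((t : ℕ) : ℤ) < (k : ℤ) + 1 := by have := t.isLt; omega
    have hsub : ((l : ℕ) : ℤ) + ((t : ℕ) : ℤ) - ((l : ℕ) : ℤ) = ((t : ℕ) : ℤ) := by ring
    rw [interpZ_eq k m ν l _ t (by
      rw [hsub, Int.emod_eq_of_lt (by positivity) htk])]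
    rw [hsub, Int.ediv_eq_zero_of_lt (by positivity) htk]
    ring
  -- the floor of any representation
  have hqrep : ∀ (ν : Fin (k + 1) →o Fin (m + 1)) (l : Fin (k + 1)) (d : ℤ),
      (∀ i, f i = interpZ k m ν l i + d * ((m : ℤ) + 1)) →
      ∀ i, q i = (i - ((l : ℕ) : ℤ)) / ((k : ℤ) + 1) + d := by
    intro ν l d hrep i
    set n : ℤ := (i - ((l : ℕ) : ℤ)) / ((k : ℤ) + 1) with hn_def
    set t : ℤ := (i - ((l : ℕ) : ℤ)) % ((k : ℤ) + 1) with ht_def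
    have ht0 : 0 ≤ t := Int.emod_nonneg _ (ne_of_gt hk1)
    have htk : t < (k : ℤ) + 1 := Int.emod_lt_of_pos _ hk1
    have hiz := interpZ_eq k m ν l i ⟨t.toNat, by omega⟩ (by
      show (i - ((l : ℕ) : ℤ)) % ((k : ℤ) + 1) = ((t.toNat : ℕ) : ℤ)
      omega)
    have hrm : ((ν ⟨t.toNat, by omega⟩ : Fin (m + 1)) : ℕ) ≤ m := by
      have := (ν ⟨t.toNat, by omega⟩).isLt; omega
    have hfi : f i = (((ν ⟨t.toNat, by omega⟩ : Fin (m + 1)) : ℕ) : ℤ) + (n + d) * ((m : ℤ) + 1) := by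
      rw [hrep i, hiz]; push_cast; ring
    have hQ : q i = f i / ((m : ℤ) + 1) := by rw [hq_def]
    rw [hQ, hfi, Int.add_mul_ediv_right _ _ (ne_of_gt hm1),
      Int.ediv_eq_zero_of_lt (by positivity) (by push_cast; omega)]
    omega
  refine ⟨⟨μ, ⟨jn, hjlt⟩⟩, ⟨c, hmain⟩, ?_⟩
  rintro ⟨ν, l⟩ ⟨d, hd⟩
  have hq1 := hqrep μ ⟨jn, hjlt⟩ c hmain
  have hq2 := hqrep ν l d hd
  have hjval : ((⟨jn, hjlt⟩ : Fin (k + 1)) : ℕ) = jn := rfl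
  rw [hjval] at hq1
  set dlt : ℤ := jz - ((l : ℕ) : ℤ) with hdlt_def
  have hdlt1 : -(k : ℤ) ≤ dlt := by have := l.isLt; omega
  have hdlt2 : dlt ≤ (k : ℤ) := by omega
  have e1 : (0 : ℤ) + c = dlt / ((k : ℤ) + 1) + d := by
    have h1 := hq1 jz
    have h2 := hq2 jz
    rw [← hjz_def] at h1
    have h3 : jz - jz = 0 := by ring
    rw [h3, Int.zero_ediv] at h1
    rw [← hdlt_def] at h2
    omega
  have e2 : (-1 : ℤ) + c = (dlt - 1) / ((k : ℤ) + 1) + d := by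
    have h1 := hq1 (jz - 1)
    have h2 := hq2 (jz - 1)
    rw [← hjz_def] at h1
    have h3 : jz - 1 - jz = -1 := by ring
    rw [h3, ediv_eq_neg_one' hk1 (by omega) (by omega)] at h1
    have h4 : jz - 1 - ((l : ℕ) : ℤ) = dlt - 1 := by rw [hdlt_def]; ring
    rw [h4] at h2
    omega
  have hdlt0 : dlt = 0 := by
    rcases lt_trichotomy dlt 0 with h | h | h
    · rw [ediv_eq_neg_one' hk1 (by omega) (by omega)] at e1
      rw [ediv_eq_neg_one' hk1 (by omega) (by omega)] at e2
      omega
    · exact h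
    · rw [Int.ediv_eq_zero_of_lt (by omega) (by omega)] at e1
      rw [Int.ediv_eq_zero_of_lt (by omega) (by omega)] at e2
      omega
  have hl : l = ⟨jn, hjlt⟩ := by
    apply Fin.ext
    rw [hjval]
    omega
  have hcd : c = d := by
    rw [hdlt0, Int.zero_ediv] at e1
    omega
  have hd' : ∀ i, f i = interpZ k m ν ⟨jn, hjlt⟩ i + d * ((m : ℤ) + 1) := by
    rw [← hl]; exact hd
  have hνμ : ν = μ := by
    apply OrderHom.ext
    funext t
    have ha := hmain (jz + ((t : ℕ) : ℤ))
    have hb := hd' (jz + ((t : ℕ) : ℤ))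
    have hwa := hwev μ ⟨jn, hjlt⟩ t
    have hwb := hwev ν ⟨jn, hjlt⟩ t
    rw [hjval, ← hjz_def] at hwa hwb
    rw [hwa] at ha
    rw [hwb, ← hcd] at hb
    have : ((ν t : Fin (m + 1)) : ℕ) = ((μ t : Fin (m + 1)) : ℕ) := by
      omega
    exact Fin.ext this
  rw [hνμ, hl]
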